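/- The localized rotational vector field is tangentially divergence free on the sphere: let R > 0, N = (0,0,R), let g : ℝ → ℝ be differentiable, and define the vector field V : ℝ³ → ℝ³ by V(y) = g(y₃)(N × y), where y₃ is the third coordinate of y. Then for every x ∈ ℝ³ with ‖x‖ = R, ∑_{i,j=1}^{3} (δ_{ij} − x_i x_j / R²) ∂_j V_i(x) = 0; that is, the velocity field ∂_e χ(0,·) = η(x)(N/R × x) of the localized rotation (with cut-off depending only on x₃) has vanishing tangential divergence. -/

import Mathlib

open scoped RealInnerProductSpace

noncomputable section

/-- Euclidean 3-space. -/
abbrev E3 := EuclideanSpace ℝ (Fin 3)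

/-- The cross product on `E3`. -/
def cross3 (a b : E3) : E3 :=
  (WithLp.equiv 2 (Fin 3 → ℝ)).symm
    (crossProduct ((WithLp.equiv 2 (Fin 3 → ℝ)) a) ((WithLp.equiv 2 (Fin 3 → ℝ)) b))

/-- Rotation by angle `α` about the axis spanned by the unit vector `n`:
`R_n(α)x = (n·x)n + cos(α)((n × x) × n) + sin(α)(n × x)`. -/
def Rn (n : E3) (α : ℝ) (x : E3) : E3 :=
  (⟪n, x⟫ : ℝ) • n + Real.cos α • cross3 (cross3 n x) n + Real.sin α • cross3 n x


def crossL (a : E3) : E3 →L[ℝ] E3 :=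
  LinearMap.toContinuousLinearMap
    ((WithLp.linearEquiv 2 ℝ (Fin 3 → ℝ)).symm.toLinearMap ∘ₗ
      crossProduct ((WithLp.equiv 2 (Fin 3 → ℝ)) a) ∘ₗ
      (WithLp.linearEquiv 2 ℝ (Fin 3 → ℝ)).toLinearMap)

lemma crossL_apply (a b : E3) : crossL a b = cross3 a b := rfl

lemma proj_apply' (i : Fin 3) (v : E3) :
    (EuclideanSpace.proj i : E3 →L[ℝ] ℝ) v = v i := rfl

/-- the localized rotational vector field `V(y) = g(y₃)(N × y)`,
`N = (0,0,R)`, with differentiable `g : ℝ → ℝ`, is tangentially divergence free on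
the sphere of radius `R`: `∑ᵢⱼ (δᵢⱼ − xᵢxⱼ/R²) ∂ⱼVᵢ(x) = 0` whenever `‖x‖ = R`. -/
theorem localized_rotational_field_tangentially_divergence_free (R : ℝ) (hR : 0 < R)
    (g : ℝ → ℝ) (hg : Differentiable ℝ g) (x : E3) (hx : ‖x‖ = R) :
    ∑ i : Fin 3, ∑ j : Fin 3,
      ((if i = j then (1 : ℝ) else 0) - x i * x j / R ^ 2) *
        (fderiv ℝ
          (fun y : E3 => g (y 2) • cross3 (EuclideanSpace.single (2 : Fin 3) R) y) x
          (EuclideanSpace.single j 1) i) = 0 := by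
  set N : E3 := EuclideanSpace.single (2 : Fin 3) R with hN
  have hc : HasFDerivAt (fun y : E3 => g (y 2))
      ((deriv g (x 2)) • (EuclideanSpace.proj (2 : Fin 3) : E3 →L[ℝ] ℝ)) x :=
    (hg (x 2)).hasDerivAt.comp_hasFDerivAt x
      (show HasFDerivAt (fun y : E3 => y 2) (EuclideanSpace.proj (2 : Fin 3) : E3 →L[ℝ] ℝ) x from
        (EuclideanSpace.proj (2 : Fin 3) : E3 →L[ℝ] ℝ).hasFDerivAt)
  have hf : HasFDerivAt (fun y : E3 => cross3 N y) (crossL N) x := (crossL N).hasFDerivAt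
  have hD : HasFDerivAt (fun y : E3 => g (y 2) • cross3 N y) _ x := hc.smul hf
  rw [hD.fderiv]
  simp only [ContinuousLinearMap.add_apply, ContinuousLinearMap.smul_apply,
    ContinuousLinearMap.smulRight_apply, ContinuousLinearMap.coe_smul', Pi.smul_apply,
    crossL_apply]
  have hcross : ∀ (b : E3) (i : Fin 3), cross3 N b i =
      (![N 1 * b 2 - N 2 * b 1, N 2 * b 0 - N 0 * b 2, N 0 * b 1 - N 1 * b 0] : Fin 3 → ℝ) i := by
    intro b i
    show (crossProduct (WithLp.equiv 2 (Fin 3 → ℝ) N) (WithLp.equiv 2 (Fin 3 → ℝ) b)) i = _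
    rw [cross_apply]
    rfl
  rw [hN] at hcross
  simp only [Fin.sum_univ_three, PiLp.add_apply, PiLp.smul_apply, smul_eq_mul, hcross, hN,
    EuclideanSpace.single_apply, Fin.reduceEq, reduceIte, if_true, if_false, proj_apply',
    Matrix.cons_val_zero, Matrix.cons_val_one, Matrix.head_cons, Matrix.cons_val_two,
    Matrix.tail_cons]
  ring
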